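/- Let B = {X ∈ ℝ³ : ‖X‖ < r} (r > 0) carry the quadratic response W(X,F) = f(‖X‖²) • (F Fᵀ − 1), and assume f : ℝ → ℝ is strictly monotone on [0,∞) and f(t) ≠ 0 for all t ∈ [0,∞). Then for every X ∈ B the β-fibre of the material groupoid at X, i.e. the set {(Y,F) : Y ∈ B, F ∈ GL(3,ℝ) a material isomorphism from Y to X}, equals the product set {Y ∈ B : ‖Y‖ = ‖X‖} × {F ∈ GL(3,ℝ) : F Fᵀ = 1}, i.e. the sphere of radius ‖X‖ times the orthogonal group O(3). -/

import Mathlib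

open Matrix

/-- `F ∈ GL(3,ℝ)` is a material isomorphism from `X` to `Y` for the
mechanical response `W`: `W (X, G * F) = W (Y, G)` for every `G ∈ GL(3,ℝ)`. -/
def IsMatIso {V : Type*} (W : EuclideanSpace ℝ (Fin 3) → GL (Fin 3) ℝ → V)
    (X Y : EuclideanSpace ℝ (Fin 3)) (F : GL (Fin 3) ℝ) : Prop :=
  ∀ G : GL (Fin 3) ℝ, W X (G * F) = W Y G

/-- The quadratic mechanical response `W(X,F) = f(‖X‖²) • (F Fᵀ − 1)`. -/
noncomputable def Wq (f : ℝ → ℝ) (X : EuclideanSpace ℝ (Fin 3)) (F : GL (Fin 3) ℝ) :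
    Matrix (Fin 3) (Fin 3) ℝ :=
  f (‖X‖ ^ 2) • ((F : Matrix (Fin 3) (Fin 3) ℝ) * (F : Matrix (Fin 3) (Fin 3) ℝ)ᵀ - 1)

/-- The diagonal matrix `2•1` as an element of `GL(3,ℝ)`. -/
noncomputable def twoGL : GL (Fin 3) ℝ where
  val := (2 : ℝ) • 1
  inv := (2⁻¹ : ℝ) • 1
  val_inv := by
    rw [Matrix.smul_mul, Matrix.mul_smul, smul_smul, Matrix.one_mul]
    norm_num
  inv_val := by
    rw [Matrix.smul_mul, Matrix.mul_smul, smul_smul, Matrix.one_mul]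
    norm_num

/-- If `f` is strictly monotone and nowhere zero on `[0,∞)`, the `β`-fibre of
the material groupoid at `X ∈ B` is the sphere of radius `‖X‖` times `O(3)`. -/
theorem matGroupoid_betaFibre (r : ℝ) (hr : 0 < r) (f : ℝ → ℝ)
    (hf : StrictMonoOn f (Set.Ici 0) ∨ StrictAntiOn f (Set.Ici 0))
    (hf0 : ∀ t ∈ Set.Ici (0 : ℝ), f t ≠ 0)
    (X : EuclideanSpace ℝ (Fin 3)) (hX : ‖X‖ < r) :
    {p : EuclideanSpace ℝ (Fin 3) × GL (Fin 3) ℝ |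
        ‖p.1‖ < r ∧ IsMatIso (Wq f) p.1 X p.2} =
      {Y : EuclideanSpace ℝ (Fin 3) | ‖Y‖ < r ∧ ‖Y‖ = ‖X‖} ×ˢ
        {F : GL (Fin 3) ℝ |
          (F : Matrix (Fin 3) (Fin 3) ℝ) * (F : Matrix (Fin 3) (Fin 3) ℝ)ᵀ = 1} := by
  have hinj : Set.InjOn f (Set.Ici 0) := hf.elim StrictMonoOn.injOn StrictAntiOn.injOn
  ext ⟨Y, F⟩
  simp only [Set.mem_setOf_eq, Set.mem_prod]
  constructor
  · rintro ⟨hY, hiso⟩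
    -- Step 1: F is orthogonal
    have h1 := hiso 1
    simp only [Wq, one_mul, Units.val_one, Matrix.transpose_one, Matrix.mul_one,
      sub_self, smul_zero] at h1
    have hFo : (F : Matrix (Fin 3) (Fin 3) ℝ) * (F : Matrix (Fin 3) (Fin 3) ℝ)ᵀ = 1 := by
      rcases smul_eq_zero.mp h1 with h | h
      · exact absurd h (hf0 _ (Set.mem_Ici.mpr (sq_nonneg _)))
      · exact sub_eq_zero.mp h
    -- Step 2: use G = 2•1 to compare f values
    have h2 := hiso twoGL
    have hval : ((twoGL * F : GL (Fin 3) ℝ) : Matrix (Fin 3) (Fin 3) ℝ) *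
        ((twoGL * F : GL (Fin 3) ℝ) : Matrix (Fin 3) (Fin 3) ℝ)ᵀ = (4 : ℝ) • 1 := by
      show (((2:ℝ) • 1) * (F : Matrix (Fin 3) (Fin 3) ℝ)) *
          (((2:ℝ) • 1) * (F : Matrix (Fin 3) (Fin 3) ℝ))ᵀ = (4 : ℝ) • 1
      rw [Matrix.transpose_mul, Matrix.transpose_smul, Matrix.transpose_one,
        Matrix.smul_mul, Matrix.smul_mul, Matrix.mul_smul, Matrix.mul_smul,
        Matrix.one_mul, Matrix.mul_one, smul_smul, hFo]
      norm_num
    have hvalG : ((twoGL : GL (Fin 3) ℝ) : Matrix (Fin 3) (Fin 3) ℝ) *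
        ((twoGL : GL (Fin 3) ℝ) : Matrix (Fin 3) (Fin 3) ℝ)ᵀ = (4 : ℝ) • 1 := by
      show (((2:ℝ) • 1) : Matrix (Fin 3) (Fin 3) ℝ) * (((2:ℝ) • (1 : Matrix (Fin 3) (Fin 3) ℝ)))ᵀ
          = (4 : ℝ) • 1
      rw [Matrix.transpose_smul, Matrix.transpose_one, Matrix.smul_mul, Matrix.mul_smul,
        smul_smul, Matrix.one_mul]
      norm_num
    rw [Wq, Wq, hval, hvalG] at h2
    -- evaluate entry (0,0)
    have hentry := congrFun (congrFun h2 0) 0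
    simp only [Matrix.smul_apply, Matrix.sub_apply, Matrix.one_apply_eq, smul_eq_mul] at hentry
    have hfeq : f (‖Y‖ ^ 2) = f (‖X‖ ^ 2) := by
      field_simp at hentry
      exact hentry
    have hsq : ‖Y‖ ^ 2 = ‖X‖ ^ 2 := hinj (Set.mem_Ici.mpr (sq_nonneg _)) (Set.mem_Ici.mpr (sq_nonneg _)) hfeq
    have hnorm : ‖Y‖ = ‖X‖ := by
      have := congrArg Real.sqrt hsq
      rwa [Real.sqrt_sq (norm_nonneg _), Real.sqrt_sq (norm_nonneg _)] at this
    exact ⟨⟨hY, hnorm⟩, hFo⟩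
  · rintro ⟨⟨hY, hnorm⟩, hF⟩
    refine ⟨hY, fun G => ?_⟩
    have hval : ((G * F : GL (Fin 3) ℝ) : Matrix (Fin 3) (Fin 3) ℝ) *
        ((G * F : GL (Fin 3) ℝ) : Matrix (Fin 3) (Fin 3) ℝ)ᵀ =
        (G : Matrix (Fin 3) (Fin 3) ℝ) * (G : Matrix (Fin 3) (Fin 3) ℝ)ᵀ := by
      rw [Units.val_mul, Matrix.transpose_mul, Matrix.mul_assoc,
        ← Matrix.mul_assoc (F : Matrix (Fin 3) (Fin 3) ℝ), hF, Matrix.one_mul]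
    rw [Wq, Wq, hval, hnorm]
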